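/- If K is a pure 2-dimensional shellable simplicial complex, then the link of every vertex of K is connected. -/

import Mathlib

open scoped Classical

/-- `K` is an abstract simplicial complex: a collection of finite sets
closed under taking subsets. -/
def IsComplex {V : Type*} (K : Finset (Finset V)) : Prop :=
  ∀ σ ∈ K, ∀ τ ⊆ σ, τ ∈ K

/-- `σ` is a facet (inclusion-maximal face) of `K`. -/
def IsFacet {V : Type*} (K : Finset (Finset V)) (σ : Finset V) : Prop :=
  σ ∈ K ∧ ∀ τ ∈ K, σ ⊆ τ → σ = τ

/-- `K` is a (nonempty) pure `d`-dimensional complex: it has a face of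
dimension `d` and every facet has dimension `d` (cardinality `d+1`). -/
def PureDim {V : Type*} (K : Finset (Finset V)) (d : ℕ) : Prop :=
  (∃ σ ∈ K, σ.card = d + 1) ∧ ∀ σ, IsFacet K σ → σ.card = d + 1

/-- The complex `σᵢ ∩ (⋃_{j<i} σⱼ)`: faces of the `i`-th member of the
ordering `L` that are contained in some earlier member. -/
noncomputable def shellStep {V : Type*} (L : List (Finset V)) (i : ℕ) (h : i < L.length) :
    Finset (Finset V) :=
  (L.get ⟨i, h⟩).powerset.filter
    (fun τ => ∃ j, ∃ hj : j < L.length, j < i ∧ τ ⊆ L.get ⟨j, hj⟩)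

/-- `L` is a shelling of the pure `d`-dimensional complex `K`: an ordering
(without repetition) of all facets of `K` such that each facet meets the union
of the previous ones in a pure `(d-1)`-dimensional complex. -/
def IsShelling {V : Type*} (K : Finset (Finset V)) (d : ℕ) (L : List (Finset V)) : Prop :=
  L.Nodup ∧ (∀ σ, IsFacet K σ ↔ σ ∈ L) ∧
    ∀ i (h : i < L.length), 1 ≤ i → PureDim (shellStep L i h) (d - 1)

/-- The link of a vertex `v` in `K`:
`lk_K(v) = {σ ∈ K : v ∉ σ and σ ∪ {v} ∈ K}`. -/
noncomputable def vertexLink {V : Type*} [DecidableEq V] (K : Finset (Finset V)) (v : V) :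
    Finset (Finset V) :=
  K.filter (fun σ => v ∉ σ ∧ insert v σ ∈ K)

theorem exists_facet {V : Type*} (K : Finset (Finset V)) {σ : Finset V} (hσ : σ ∈ K) :
    ∃ τ, IsFacet K τ ∧ σ ⊆ τ := by
  classical
  obtain ⟨τ, hτ, hmax⟩ : ∃ τ ∈ K.filter (σ ⊆ ·), ∀ x ∈ K.filter (σ ⊆ ·), ¬ τ < x := by
    obtain ⟨τ, hτ⟩ := Finset.exists_maximal (s := K.filter (σ ⊆ ·)) ⟨σ, by simp [hσ]⟩
    exact ⟨τ, hτ.1, fun x hx hlt => hlt.2 (hτ.2 hx hlt.1)⟩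
  simp only [Finset.mem_filter] at hτ
  refine ⟨τ, ⟨hτ.1, fun ρ hρ hsub => ?_⟩, hτ.2⟩
  by_contra hne
  exact hmax ρ (Finset.mem_filter.2 ⟨hρ, hτ.2.trans hsub⟩) (lt_of_le_of_ne hsub hne)

theorem link_edge {V : Type*} [DecidableEq V] {K : Finset (Finset V)} (hK : IsComplex K)
    {σ : Finset V} (hσ : σ ∈ K) {v x y : V} (hvσ : v ∈ σ) (hxσ : x ∈ σ) (hyσ : y ∈ σ)
    (hxv : x ≠ v) (hyv : y ≠ v) :
    ({x, y} : Finset V) ∈ vertexLink K v := by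
  have h1 : ({x, y} : Finset V) ⊆ σ := by
    intro z hz
    rcases Finset.mem_insert.1 hz with rfl | hz
    · exact hxσ
    · exact (Finset.mem_singleton.1 hz) ▸ hyσ
  have h2 : insert v ({x, y} : Finset V) ⊆ σ := Finset.insert_subset hvσ h1
  rw [vertexLink, Finset.mem_filter]
  refine ⟨hK σ hσ _ h1, ?_, hK σ hσ _ h2⟩
  simp only [Finset.mem_insert, Finset.mem_singleton]
  rintro (rfl | rfl)
  · exact hxv rfl
  · exact hyv rfl

theorem reach_in_triangle {V : Type*} [DecidableEq V] {K : Finset (Finset V)} (hK : IsComplex K)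
    {σ : Finset V} (hσ : σ ∈ K) {v x y : V} (hvσ : v ∈ σ) (hxσ : x ∈ σ) (hyσ : y ∈ σ)
    (hxv : x ≠ v) (hyv : y ≠ v) :
    (SimpleGraph.fromRel (fun a b => ({a, b} : Finset V) ∈ vertexLink K v)).Reachable x y := by
  rcases eq_or_ne x y with rfl | hxy
  · exact SimpleGraph.Reachable.refl x
  · exact SimpleGraph.Adj.reachable
      ((SimpleGraph.fromRel_adj _ x y).2 ⟨hxy, Or.inl (link_edge hK hσ hvσ hxσ hyσ hxv hyv)⟩)

theorem bridge {V : Type*} [DecidableEq V] {K : Finset (Finset V)}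
    {L : List (Finset V)} (hs : IsShelling K 2 L) {v : V} {i : ℕ} (hi : i < L.length)
    (hvi : v ∈ L.get ⟨i, hi⟩) {j : ℕ} (hj : j < L.length) (hji : j < i)
    (hvj : v ∈ L.get ⟨j, hj⟩) :
    ∃ x, x ≠ v ∧ x ∈ L.get ⟨i, hi⟩ ∧ ∃ j', ∃ hj' : j' < L.length, j' < i ∧
      v ∈ L.get ⟨j', hj'⟩ ∧ x ∈ L.get ⟨j', hj'⟩ := by
  have hpure := hs.2.2 i hi (by omega)
  have hmem : ({v} : Finset V) ∈ shellStep L i hi := by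
    simp only [shellStep, Finset.mem_filter, Finset.mem_powerset]
    exact ⟨Finset.singleton_subset_iff.2 hvi, j, hj, hji, Finset.singleton_subset_iff.2 hvj⟩
  obtain ⟨τ, hτfac, hτsub⟩ := exists_facet _ hmem
  have hcard : τ.card = 2 := hpure.2 τ hτfac
  have hτmem := hτfac.1
  simp only [shellStep, Finset.mem_filter, Finset.mem_powerset] at hτmem
  obtain ⟨hτσ, j', hj', hj'i, hτj'⟩ := hτmem
  have hvτ : v ∈ τ := hτsub (Finset.mem_singleton_self v)
  have hne : (τ.erase v).Nonempty := by
    rw [← Finset.card_pos, Finset.card_erase_of_mem hvτ, hcard]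
    omega
  obtain ⟨x, hx⟩ := hne
  rw [Finset.mem_erase] at hx
  exact ⟨x, hx.1, hτσ hx.2, j', hj', hj'i, hτj' hvτ, hτj' hx.2⟩

theorem key_reach {V : Type*} [DecidableEq V] {K : Finset (Finset V)} (hK : IsComplex K)
    {L : List (Finset V)} (hs : IsShelling K 2 L) (v : V) :
    ∀ i, ∀ a b : V, a ≠ v → b ≠ v →
      (∃ j, ∃ hj : j < L.length, j < i ∧ v ∈ L.get ⟨j, hj⟩ ∧ a ∈ L.get ⟨j, hj⟩) →
      (∃ j, ∃ hj : j < L.length, j < i ∧ v ∈ L.get ⟨j, hj⟩ ∧ b ∈ L.get ⟨j, hj⟩) →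
      (SimpleGraph.fromRel (fun x y => ({x, y} : Finset V) ∈ vertexLink K v)).Reachable a b := by
  intro i
  induction i with
  | zero => rintro a b _ _ ⟨j, hj, hji, _⟩ _; omega
  | succ i ih =>
    rintro a b hav hbv ⟨ja, hja, hjai, hvja, haja⟩ ⟨jb, hjb, hjbi, hvjb, hbjb⟩
    have memK : ∀ (j : ℕ) (hj : j < L.length), L.get ⟨j, hj⟩ ∈ K := fun j hj =>
      ((hs.2.1 _).2 (List.get_mem L ⟨j, hj⟩)).1
    by_cases h1 : ja < i
    · by_cases h2 : jb < i
      · exact ih a b hav hbv ⟨ja, hja, h1, hvja, haja⟩ ⟨jb, hjb, h2, hvjb, hbjb⟩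
      · have hji : jb = i := by omega
        subst hji
        obtain ⟨x, hxv, hxσ, j', hj', hj'lt, hvj', hxj'⟩ := bridge hs hjb hvjb hja h1 hvja
        have r1 := ih a x hav hxv ⟨ja, hja, h1, hvja, haja⟩ ⟨j', hj', hj'lt, hvj', hxj'⟩
        have r2 := reach_in_triangle hK (memK jb hjb) hvjb hxσ hbjb hxv hbv
        exact r1.trans r2
    · have hji : ja = i := by omega
      subst hji
      by_cases h2 : jb < ja
      · obtain ⟨x, hxv, hxσ, j', hj', hj'lt, hvj', hxj'⟩ := bridge hs hja hvja hjb h2 hvjb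
        have r1 := reach_in_triangle hK (memK ja hja) hvja haja hxσ hav hxv
        have r2 := ih x b hxv hbv ⟨j', hj', hj'lt, hvj', hxj'⟩ ⟨jb, hjb, h2, hvjb, hbjb⟩
        exact r1.trans r2
      · have hji : jb = ja := by omega
        subst hji
        exact reach_in_triangle hK (memK jb hjb) hvjb haja hbjb hav hbv


/-- in a pure 2-dimensional shellable complex, the link of every
vertex is a connected graph. -/
theorem shellable_links_connected {V : Type*} [DecidableEq V]
    (K : Finset (Finset V)) (hK : IsComplex K) (hpure : PureDim K 2)
    (hshell : ∃ L, IsShelling K 2 L) (v : V) (hv : ({v} : Finset V) ∈ K) :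
    ∀ a b : V, ({a} : Finset V) ∈ vertexLink K v → ({b} : Finset V) ∈ vertexLink K v →
      (SimpleGraph.fromRel
          (fun x y => ({x, y} : Finset V) ∈ vertexLink K v)).Reachable a b := by
  obtain ⟨L, hs⟩ := hshell
  intro a b ha hb
  rw [vertexLink, Finset.mem_filter] at ha hb
  obtain ⟨haK, hva, hvaK⟩ := ha
  obtain ⟨hbK, hvb, hvbK⟩ := hb
  have hav : a ≠ v := fun h => hva (by simp [h])
  have hbv : b ≠ v := fun h => hvb (by simp [h])
  have wit : ∀ c : V, insert v ({c} : Finset V) ∈ K →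
      ∃ j, ∃ hj : j < L.length, j < L.length ∧ v ∈ L.get ⟨j, hj⟩ ∧ c ∈ L.get ⟨j, hj⟩ := by
    intro c hc
    obtain ⟨τ, hτfac, hτsub⟩ := exists_facet K hc
    obtain ⟨⟨j, hj⟩, hget⟩ := List.mem_iff_get.1 ((hs.2.1 τ).1 hτfac)
    refine ⟨j, hj, hj, ?_, ?_⟩
    · rw [hget]; exact hτsub (Finset.mem_insert_self v _)
    · rw [hget]; exact hτsub (Finset.mem_insert_of_mem (Finset.mem_singleton_self c))
  exact key_reach hK hs v L.length a b hav hbv (wit a hvaK) (wit b hvbK)
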